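/- Let A be a commutative ring graded by the natural numbers such that the product of any m+1 homogeneous elements of positive degree is zero. Then in the tensor product algebra A ⊗ A, the product of any 2m+1 homogeneous elementary tensors u_i ⊗ v_i, each of total positive degree, is zero. -/

import Mathlib

open TensorProduct

lemma aux11 {m n : ℕ} {A : Type*} [CommRing A] (𝒜 : ℕ → Submodule ℤ A)
    (hzero : ∀ f : Fin (m + 1) → A, (∀ i, ∃ d, 0 < d ∧ f i ∈ 𝒜 d) → ∏ i, f i = 0)
    (w : Fin n → A) (T : Finset (Fin n)) (hT : T.card = m + 1)
    (h : ∀ i ∈ T, ∃ d, 0 < d ∧ w i ∈ 𝒜 d) : ∏ i, w i = 0 := by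
  let e : Fin (m + 1) ≃ T := (T.equivFin.trans (finCongr hT)).symm
  have h1 : ∏ j : Fin (m + 1), w (e j) = 0 :=
    hzero _ (fun j => h _ (e j).2)
  have h2 : ∏ x ∈ T, w x = 0 := by
    rw [← Finset.prod_coe_sort T w, ← Equiv.prod_comp e (fun x : T => w x)]
    exact h1
  calc ∏ i, w i = (∏ x ∈ T, w x) * ∏ x ∈ Tᶜ, w x := (Finset.prod_mul_prod_compl T w).symm
    _ = 0 := by rw [h2, zero_mul]

theorem stmt11 (m : ℕ) {A : Type*} [CommRing A] (𝒜 : ℕ → Submodule ℤ A) [GradedRing 𝒜]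
    (hzero : ∀ f : Fin (m + 1) → A, (∀ i, ∃ d, 0 < d ∧ f i ∈ 𝒜 d) → ∏ i, f i = 0)
    (u v : Fin (2 * m + 1) → A) (du dv : Fin (2 * m + 1) → ℕ)
    (hu : ∀ i, u i ∈ 𝒜 (du i)) (hv : ∀ i, v i ∈ 𝒜 (dv i))
    (hpos : ∀ i, 0 < du i + dv i) :
    (∏ i, (u i ⊗ₜ[ℤ] v i) : A ⊗[ℤ] A) = 0 := by
  have key : (∏ i, (u i ⊗ₜ[ℤ] v i) : A ⊗[ℤ] A) = (∏ i, u i) ⊗ₜ[ℤ] (∏ i, v i) := by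
    induction (Finset.univ : Finset (Fin (2 * m + 1))) using Finset.induction with
    | empty => simp [Algebra.TensorProduct.one_def]
    | @insert a s hx ih =>
        rw [Finset.prod_insert hx, Finset.prod_insert hx, Finset.prod_insert hx, ih,
          Algebra.TensorProduct.tmul_mul_tmul]
  rw [key]
  set S : Finset (Fin (2 * m + 1)) := Finset.univ.filter (fun i => 0 < du i) with hS
  have hcard : S.card + Sᶜ.card = 2 * m + 1 := by
    rw [Finset.card_add_card_compl]; simp
  rcases le_or_gt (m + 1) S.card with hle | hlt
  · obtain ⟨T, hTS, hTc⟩ := Finset.exists_subset_card_eq hle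
    have : ∏ i, u i = 0 := aux11 𝒜 hzero u T hTc (fun i hi => by
      have := hTS hi
      rw [hS, Finset.mem_filter] at this
      exact ⟨du i, this.2, hu i⟩)
    rw [this, TensorProduct.zero_tmul]
  · have hle' : m + 1 ≤ Sᶜ.card := by omega
    obtain ⟨T, hTS, hTc⟩ := Finset.exists_subset_card_eq (s := Sᶜ) hle'
    have : ∏ i, v i = 0 := aux11 𝒜 hzero v T hTc (fun i hi => by
      have hi' := hTS hi
      rw [hS, Finset.compl_filter, Finset.mem_filter] at hi'
      have : du i = 0 := by omega
      exact ⟨dv i, by have := hpos i; omega, hv i⟩)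
    rw [this, TensorProduct.tmul_zero]
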